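/- Let L be a finite sublattice of the Boolean lattice on {p_1,...,p_n} with ∅ ∈ L and {p_1,...,p_n} ∈ L in which all maximal chains have the same length r. Then the number of maximal chains of L is at most n!, with equality if and only if L is the full Boolean lattice (in which case r = n). -/

import Mathlib

/-- The set of maximal chains of a subset `L` of the Boolean lattice. -/
def MaxChainsOf {n : ℕ} (L : Set (Set (Fin n))) : Set (Set (Set (Fin n))) :=
  {c | c ⊆ L ∧ IsChain (· ⊆ ·) c ∧
    ∀ c', c' ⊆ L → IsChain (· ⊆ ·) c' → c ⊆ c' → c' = c}

open Set

namespace Stmt15Aux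

variable {n : ℕ}

/-! ### Chains from permutations -/

/-- The `k`-th element of the maximal Boolean chain associated to a permutation. -/
def pchain (σ : Equiv.Perm (Fin n)) (k : Fin (n + 1)) : Set (Fin n) :=
  {i : Fin n | (σ.symm i : ℕ) < (k : ℕ)}

lemma pchain_zero (σ : Equiv.Perm (Fin n)) : pchain σ 0 = ∅ := by
  ext i; simp [pchain]

lemma pchain_last (σ : Equiv.Perm (Fin n)) : pchain σ (Fin.last n) = Set.univ := by
  ext i; simp [pchain, (σ.symm i).isLt]

lemma sigma_not_mem (σ : Equiv.Perm (Fin n)) (k : Fin n) :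
    σ k ∉ pchain σ k.castSucc := by
  simp [pchain]

lemma pchain_succ (σ : Equiv.Perm (Fin n)) (k : Fin n) :
    pchain σ k.succ = insert (σ k) (pchain σ k.castSucc) := by
  ext i
  simp only [pchain, mem_setOf_eq, mem_insert_iff, Fin.val_succ, Fin.coe_castSucc]
  constructor
  · intro h
    rcases Nat.lt_succ_iff_lt_or_eq.mp h with h | h
    · exact Or.inr h
    · left
      have hk : σ.symm i = k := Fin.ext h
      rw [← hk]; simp
  · rintro (rfl | h)
    · simp [Nat.lt_succ_iff]
    · exact h.trans (Nat.lt_succ_self _)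

lemma pchain_isMaxChain (σ : Equiv.Perm (Fin n)) :
    IsMaxChain (· ⊆ ·) (Set.range (pchain σ)) := by
  refine IsMaxChain.range_fin_of_covBy (pchain_zero σ) (pchain_last σ) (fun k => ?_)
  rw [pchain_succ]
  exact (Set.covBy_insert (sigma_not_mem σ k)).wcovBy

lemma ncard_lt_set (k : Fin (n + 1)) :
    {j : Fin n | (j : ℕ) < (k : ℕ)}.ncard = (k : ℕ) := by
  rw [← Nat.card_coe_set_eq]
  have e : {j : Fin n | (j : ℕ) < (k : ℕ)} ≃ Fin (k : ℕ) :=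
    { toFun := fun j => ⟨(j.1 : ℕ), j.2⟩
      invFun := fun m => ⟨⟨(m : ℕ), lt_of_lt_of_le m.isLt (Nat.lt_succ_iff.mp k.isLt)⟩, m.isLt⟩
      left_inv := fun _ => rfl
      right_inv := fun _ => rfl }
  rw [Nat.card_congr e, Nat.card_eq_fintype_card, Fintype.card_fin]

lemma pchain_ncard (σ : Equiv.Perm (Fin n)) (k : Fin (n + 1)) :
    (pchain σ k).ncard = (k : ℕ) := by
  have h : pchain σ k = ⇑σ '' {j : Fin n | (j : ℕ) < (k : ℕ)} := by
    rw [Equiv.image_eq_preimage_symm]; rfl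
  rw [h, Set.ncard_image_of_injective _ σ.injective, ncard_lt_set]

lemma pchain_injective (σ : Equiv.Perm (Fin n)) : Function.Injective (pchain σ) := by
  intro k l h
  have h1 := pchain_ncard σ k
  rw [h, pchain_ncard σ l] at h1
  exact Fin.ext h1.symm

lemma pchain_range_injective :
    Function.Injective (fun σ : Equiv.Perm (Fin n) => Set.range (pchain σ)) := by
  intro σ τ h
  have key : ∀ k, pchain σ k = pchain τ k := by
    intro k
    have h' : Set.range (pchain σ) = Set.range (pchain τ) := h
    have h1 : pchain σ k ∈ Set.range (pchain τ) := by
      rw [← h']; exact ⟨k, rfl⟩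
    obtain ⟨l, hl⟩ := h1
    have h2 := pchain_ncard τ l
    rw [hl, pchain_ncard σ k] at h2
    rw [← hl]
    exact congrArg (pchain τ) (Fin.ext h2).symm
  have hsymm : ∀ i, σ.symm i = τ.symm i := by
    intro i
    have haux : ∀ (a b : Equiv.Perm (Fin n)), (∀ k, pchain a k = pchain b k) →
        (b.symm i : ℕ) ≤ (a.symm i : ℕ) := by
      intro a b hab
      have hk : ((a.symm i : ℕ) + 1) < n + 2 := by
        have := (a.symm i).isLt; omega
      have hmem : i ∈ pchain a ⟨(a.symm i : ℕ) + 1, by omega⟩ := by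
        simp [pchain]
      rw [hab] at hmem
      simpa [pchain, Nat.lt_succ_iff] using hmem
    exact Fin.ext (le_antisymm (haux τ σ (fun k => (key k).symm)) (haux σ τ key))
  have : σ.symm = τ.symm := Equiv.ext hsymm
  have h2 : σ.symm.symm = τ.symm.symm := by rw [this]
  simpa using h2

/-! ### Finite chains have greatest and least elements -/

lemma chain_exists_top {s : Set (Set (Fin n))} (hne : s.Nonempty)
    (hchain : IsChain (· ⊆ ·) s) : ∃ A ∈ s, ∀ D ∈ s, D ⊆ A := by
  obtain ⟨A, hA, hmax⟩ := Set.Finite.exists_maximalFor id s (Set.toFinite s) hne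
  refine ⟨A, hA, fun D hD => ?_⟩
  rcases eq_or_ne D A with rfl | hne'
  · exact subset_rfl
  · rcases hchain hD hA hne' with h | h
    · exact h
    · exact hmax hD h

lemma chain_exists_bot {s : Set (Set (Fin n))} (hne : s.Nonempty)
    (hchain : IsChain (· ⊆ ·) s) : ∃ A ∈ s, ∀ D ∈ s, A ⊆ D := by
  obtain ⟨A, hA, hmin⟩ := Set.Finite.exists_minimalFor id s (Set.toFinite s) hne
  refine ⟨A, hA, fun D hD => ?_⟩
  rcases eq_or_ne D A with rfl | hne'
  · exact subset_rfl
  · rcases hchain hD hA hne' with h | h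
    · exact hmin hD h
    · exact h

/-! ### Structure of maximal chains of the full Boolean lattice -/

lemma exists_ncard_mem {c : Set (Set (Fin n))} (hc : IsMaxChain (· ⊆ ·) c)
    (k : ℕ) (hk : k ≤ n) : ∃ A ∈ c, A.ncard = k := by
  by_contra hcon
  push_neg at hcon
  have hbot : (∅ : Set (Fin n)) ∈ c := hc.bot_mem
  have htop : (univ : Set (Fin n)) ∈ c := hc.top_mem
  have hSchain : IsChain (· ⊆ ·) {D ∈ c | D.ncard ≤ k} :=
    IsChain.mono (fun D hD => (mem_sep_iff.mp hD).1) hc.isChain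
  obtain ⟨A, hAS', hAmax'⟩ := chain_exists_top ⟨∅, mem_sep hbot (by simp)⟩ hSchain
  rw [mem_sep_iff] at hAS'
  have hAS := hAS'
  have hAmax : ∀ D ∈ c, D.ncard ≤ k → D ⊆ A := fun D h1 h2 => hAmax' D (mem_sep h1 h2)
  have hAk : A.ncard < k := lt_of_le_of_ne hAS.2 (fun h => hcon A hAS.1 h)
  have hAne : A ≠ univ := by
    intro h
    rw [h, Set.ncard_univ, Nat.card_eq_fintype_card, Fintype.card_fin] at hAk
    omega
  have hTchain : IsChain (· ⊆ ·) {D ∈ c | A ⊂ D} :=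
    IsChain.mono (fun D hD => (mem_sep_iff.mp hD).1) hc.isChain
  obtain ⟨B, hBT', hBmin'⟩ := chain_exists_bot
    ⟨univ, mem_sep htop ((subset_univ A).ssubset_of_ne hAne)⟩ hTchain
  rw [mem_sep_iff] at hBT'
  have hBT := hBT'
  have hBmin : ∀ D ∈ c, A ⊂ D → B ⊆ D := fun D h1 h2 => hBmin' D (mem_sep h1 h2)
  have hsplit : ∀ D ∈ c, D ⊆ A ∨ B ⊆ D := by
    intro D hD
    rcases eq_or_ne D A with rfl | hne'
    · exact Or.inl subset_rfl
    rcases hc.isChain hD hAS.1 hne' with h | h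
    · exact Or.inl h
    · exact Or.inr (hBmin D hD (h.ssubset_of_ne hne'.symm))
  have hABk : k < B.ncard := by
    by_contra h
    push_neg at h
    exact (hBT.2).not_subset (hAmax B hBT.1 h)
  obtain ⟨x, hxB, hxA⟩ := Set.exists_of_ssubset hBT.2
  have hMk : (insert x A).ncard = A.ncard + 1 := Set.ncard_insert_of_notMem hxA
  have hMB : insert x A ⊆ B := insert_subset hxB hBT.2.subset
  have hMc : insert x A ∉ c := by
    intro h
    rcases hsplit _ h with h' | h'
    · exact hxA (h' (mem_insert x A))
    · have := Set.ncard_le_ncard h' (Set.toFinite _)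
      omega
  have hchain' : IsChain (· ⊆ ·) (insert (insert x A) c) := by
    apply hc.isChain.insert
    intro D hD _
    rcases hsplit D hD with h' | h'
    · exact Or.inr (h'.trans (subset_insert x A))
    · exact Or.inl (hMB.trans h')
  have heq := hc.2 hchain' (subset_insert _ c)
  exact hMc (heq ▸ mem_insert _ c)

lemma eq_of_mem_ncard {c : Set (Set (Fin n))} (hchain : IsChain (· ⊆ ·) c)
    {A B : Set (Fin n)} (hA : A ∈ c) (hB : B ∈ c) (h : A.ncard = B.ncard) : A = B := by
  rcases eq_or_ne A B with rfl | hne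
  · rfl
  rcases hchain hA hB hne with h' | h'
  · exact Set.eq_of_subset_of_ncard_le h' h.ge
  · exact (Set.eq_of_subset_of_ncard_le h' h.le).symm

lemma pchain_surj {c : Set (Set (Fin n))} (hc : IsMaxChain (· ⊆ ·) c) :
    ∃ σ : Equiv.Perm (Fin n), Set.range (pchain σ) = c := by
  have hex : ∀ k : Fin (n + 1), ∃ A, A ∈ c ∧ A.ncard = (k : ℕ) := by
    intro k
    obtain ⟨A, hA1, hA2⟩ := exists_ncard_mem hc (k : ℕ) (Nat.lt_succ_iff.mp k.isLt)
    exact ⟨A, hA1, hA2⟩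
  choose F hFmem hFcard using hex
  have hFmono : ∀ {k l : Fin (n + 1)}, k ≤ l → F k ⊆ F l := by
    intro k l hkl
    rcases eq_or_ne (F k) (F l) with h | h
    · exact h.subset
    rcases hc.isChain (hFmem k) (hFmem l) h with h' | h'
    · exact h'
    · exfalso
      have h1 := Set.ncard_le_ncard h' (Set.toFinite _)
      rw [hFcard, hFcard] at h1
      have : (k : ℕ) = (l : ℕ) := le_antisymm hkl h1
      exact h (by rw [Fin.ext this])
  have hstep : ∀ k : Fin n, ∃ x, x ∉ F k.castSucc ∧ F k.succ = insert x (F k.castSucc) := by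
    intro k
    have hsub : F k.castSucc ⊆ F k.succ := hFmono (by
      rw [Fin.le_def]; simp [Nat.le_succ])
    have hne : F k.castSucc ≠ F k.succ := by
      intro h
      have h1 := hFcard k.castSucc
      rw [h, hFcard k.succ] at h1
      simp [Fin.val_succ] at h1
    obtain ⟨x, hx1, hx2⟩ := Set.exists_of_ssubset (hsub.ssubset_of_ne hne)
    refine ⟨x, hx2, ?_⟩
    refine (Set.eq_of_subset_of_ncard_le (insert_subset hx1 hsub) ?_).symm
    rw [Set.ncard_insert_of_notMem hx2, hFcard, hFcard]
    simp [Fin.val_succ]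
  choose g hg using hstep
  have hginj : Function.Injective g := by
    have haux : ∀ k l : Fin n, k < l → g k ≠ g l := by
      intro k l hkl h
      have h1 : g k ∈ F k.succ := by rw [(hg k).2]; exact mem_insert _ _
      have h2 : F k.succ ⊆ F l.castSucc := hFmono (by
        rw [Fin.le_def]; simp only [Fin.val_succ, Fin.coe_castSucc]
        exact Fin.lt_def.mp hkl)
      exact (hg l).1 (h ▸ h2 h1)
    intro k l h
    by_contra hne
    rcases lt_or_gt_of_ne hne with h' | h'
    · exact haux k l h' h
    · exact haux l k h' h.symm
  let σ : Equiv.Perm (Fin n) := Equiv.ofBijective g (Finite.injective_iff_bijective.mp hginj)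
  have key : ∀ k : Fin (n + 1), pchain σ k = F k := by
    intro k
    induction k using Fin.induction with
    | zero =>
      rw [pchain_zero]
      symm
      rw [← Set.ncard_eq_zero (Set.toFinite _)]
      simpa using hFcard 0
    | succ k ih =>
      rw [pchain_succ, ih, (hg k).2]
      rfl
  refine ⟨σ, ?_⟩
  ext A
  constructor
  · rintro ⟨k, rfl⟩
    rw [key k]
    exact hFmem k
  · intro hA
    have hAn : A.ncard ≤ n := by
      have := Set.ncard_le_ncard (subset_univ A) (Set.toFinite _)
      rwa [Set.ncard_univ, Nat.card_eq_fintype_card, Fintype.card_fin] at this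
    refine ⟨⟨A.ncard, by omega⟩, ?_⟩
    rw [key]
    exact eq_of_mem_ncard hc.isChain (hFmem _) hA (by rw [hFcard])

lemma isMaxChain_ncard {c : Set (Set (Fin n))} (hc : IsMaxChain (· ⊆ ·) c) :
    c.ncard = n + 1 := by
  obtain ⟨σ, rfl⟩ := pchain_surj hc
  rw [← Nat.card_coe_set_eq, Nat.card_range_of_injective (pchain_injective σ),
    Nat.card_eq_fintype_card, Fintype.card_fin]

/-! ### Maximal chains of `univ` and counting -/

lemma maxChainsOf_univ :
    MaxChainsOf (Set.univ : Set (Set (Fin n))) = {c | IsMaxChain (· ⊆ ·) c} := by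
  ext c
  constructor
  · rintro ⟨-, h2, h3⟩
    exact ⟨h2, fun t ht hct => (h3 t (subset_univ t) ht hct).symm⟩
  · intro h
    exact ⟨subset_univ c, h.1, fun c' _ hc' hcc' => (h.2 hc' hcc').symm⟩

lemma ncard_maxChains_univ :
    (MaxChainsOf (Set.univ : Set (Set (Fin n)))).ncard = n.factorial := by
  rw [maxChainsOf_univ, ← Nat.card_coe_set_eq, Set.coe_setOf]
  have e : Equiv.Perm (Fin n) ≃ {c : Set (Set (Fin n)) // IsMaxChain (· ⊆ ·) c} := by
    refine Equiv.ofBijective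
      (fun σ => ⟨Set.range (pchain σ), pchain_isMaxChain σ⟩) ⟨?_, ?_⟩
    · intro σ τ h
      exact pchain_range_injective (congrArg Subtype.val h)
    · rintro ⟨c, hc⟩
      obtain ⟨σ, hσ⟩ := pchain_surj hc
      exact ⟨σ, Subtype.ext hσ⟩
  rw [Nat.card_congr e.symm, Nat.card_eq_fintype_card, Fintype.card_perm, Fintype.card_fin]

/-! ### Maximal chains of a sublattice -/

variable {L : Set (Set (Fin n))}

lemma maxchain_mem_bot (hbot : (∅ : Set (Fin n)) ∈ L) {c : Set (Set (Fin n))}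
    (hc : c ∈ MaxChainsOf L) : (∅ : Set (Fin n)) ∈ c := by
  obtain ⟨h1, h2, h3⟩ := hc
  have heq : insert ∅ c = c :=
    h3 _ (insert_subset hbot h1)
      (h2.insert (fun D _ _ => Or.inl (empty_subset D))) (subset_insert _ _)
  exact heq ▸ mem_insert _ _

lemma maxchain_mem_top (htop : (univ : Set (Fin n)) ∈ L) {c : Set (Set (Fin n))}
    (hc : c ∈ MaxChainsOf L) : (univ : Set (Fin n)) ∈ c := by
  obtain ⟨h1, h2, h3⟩ := hc
  have heq : insert univ c = c :=
    h3 _ (insert_subset htop h1)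
      (h2.insert (fun D _ _ => Or.inr (subset_univ D))) (subset_insert _ _)
  exact heq ▸ mem_insert _ _

/-- Two maximal chains of `L` contained in a common chain are equal. -/
lemma maxchain_unique {c c' C : Set (Set (Fin n))} (hc : c ∈ MaxChainsOf L)
    (hc' : c' ∈ MaxChainsOf L) (hC : IsChain (· ⊆ ·) C) (h1 : c ⊆ C) (h2 : c' ⊆ C) :
    c = c' := by
  have hcc' : IsChain (· ⊆ ·) (c ∪ c') := IsChain.mono (union_subset h1 h2) hC
  have e1 : c ∪ c' = c := hc.2.2 _ (union_subset hc.1 hc'.1) hcc' subset_union_left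
  have e2 : c ∪ c' = c' := hc'.2.2 _ (union_subset hc.1 hc'.1) hcc' subset_union_right
  rw [← e1, e2]

open Classical in
/-- An extension of a chain to a maximal chain of the full Boolean lattice. -/
noncomputable def extChain (c : Set (Set (Fin n))) : Set (Set (Fin n)) :=
  if h : IsChain (· ⊆ ·) c then h.exists_maxChain.choose else c

lemma extChain_spec {c : Set (Set (Fin n))} (h : IsChain (· ⊆ ·) c) :
    IsMaxChain (· ⊆ ·) (extChain c) ∧ c ⊆ extChain c := by
  rw [extChain, dif_pos h]
  exact h.exists_maxChain.choose_spec

lemma extChain_maps (c : Set (Set (Fin n))) (hc : c ∈ MaxChainsOf L) :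
    extChain c ∈ MaxChainsOf (Set.univ : Set (Set (Fin n))) := by
  rw [maxChainsOf_univ]
  exact (extChain_spec hc.2.1).1

lemma extChain_injOn : Set.InjOn extChain (MaxChainsOf L) := by
  intro c hc c' hc' h
  exact maxchain_unique hc hc' (extChain_spec hc.2.1).1.isChain
    (extChain_spec hc.2.1).2 (h ▸ (extChain_spec hc'.2.1).2)

end Stmt15Aux

open Stmt15Aux Set in
/-- A sublattice `L` of the Boolean lattice on `n` elements containing `∅` and
the full set, all of whose maximal chains have the same length `r`, has at
most `n!` maximal chains, with equality iff `L` is the full Boolean lattice,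
in which case `r = n`. -/
theorem stmt15 (n : ℕ) (L : Set (Set (Fin n)))
    (hbot : (∅ : Set (Fin n)) ∈ L) (htop : (Set.univ : Set (Fin n)) ∈ L)
    (hlat : ∀ a ∈ L, ∀ b ∈ L, a ∪ b ∈ L ∧ a ∩ b ∈ L)
    (r : ℕ) (hr : ∀ c ∈ MaxChainsOf L, c.ncard = r + 1) :
    (MaxChainsOf L).ncard ≤ n.factorial ∧
    ((MaxChainsOf L).ncard = n.factorial ↔ L = Set.univ) ∧
    (L = Set.univ → r = n) := by
  have hle : (MaxChainsOf L).ncard ≤ (MaxChainsOf (Set.univ : Set (Set (Fin n)))).ncard :=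
    Set.ncard_le_ncard_of_injOn extChain extChain_maps extChain_injOn (Set.toFinite _)
  have hrn : L = Set.univ → r = n := by
    rintro rfl
    have hmem : Set.range (pchain (1 : Equiv.Perm (Fin n))) ∈
        MaxChainsOf (Set.univ : Set (Set (Fin n))) := by
      rw [maxChainsOf_univ]
      exact pchain_isMaxChain 1
    have h1 := hr _ hmem
    have h2 : (Set.range (pchain (1 : Equiv.Perm (Fin n)))).ncard = n + 1 :=
      isMaxChain_ncard (pchain_isMaxChain 1)
    omega
  refine ⟨hle.trans_eq ncard_maxChains_univ, ⟨?_, ?_⟩, hrn⟩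
  · -- equality implies L = univ
    intro hcard
    have himg : extChain '' (MaxChainsOf L) = MaxChainsOf (Set.univ : Set (Set (Fin n))) := by
      apply Set.eq_of_subset_of_ncard_le
      · rintro _ ⟨c, hc, rfl⟩
        exact extChain_maps c hc
      · rw [Set.ncard_image_of_injOn extChain_injOn, hcard, ncard_maxChains_univ]
      · exact Set.toFinite _
    -- every maximal chain of L is a maximal chain of the Boolean lattice
    have hflag : ∀ c ∈ MaxChainsOf L, IsMaxChain (· ⊆ ·) c := by
      intro c hc
      by_contra hnot
      have hchainc := hc.2.1
      rw [IsMaxChain, not_and] at hnot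
      push_neg at hnot
      obtain ⟨t, ht, hct, hne⟩ := hnot hchainc
      obtain ⟨M, hMt, hMc⟩ : ∃ M ∈ t, M ∉ c := by
        by_contra h
        push_neg at h
        exact hne (subset_antisymm hct h)
      have hbotc : (∅ : Set (Fin n)) ∈ c := maxchain_mem_bot hbot hc
      have htopc : (univ : Set (Fin n)) ∈ c := maxchain_mem_top htop hc
      have hcomp : ∀ D ∈ c, D ⊆ M ∨ M ⊆ D := by
        intro D hD
        rcases eq_or_ne D M with rfl | hne'
        · exact Or.inl subset_rfl
        · exact ht (hct hD) hMt hne'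
      obtain ⟨A, hAS', hAmax'⟩ := chain_exists_top (s := {D ∈ c | D ⊆ M})
        ⟨∅, mem_sep hbotc (empty_subset M)⟩
        (IsChain.mono (fun D hD => (mem_sep_iff.mp hD).1) hchainc)
      rw [mem_sep_iff] at hAS'
      have hAS := hAS'
      have hAmax : ∀ D ∈ c, D ⊆ M → D ⊆ A := fun D h1 h2 => hAmax' D (mem_sep h1 h2)
      obtain ⟨B, hBT', hBmin'⟩ := chain_exists_bot (s := {D ∈ c | M ⊆ D})
        ⟨univ, mem_sep htopc (subset_univ M)⟩
        (IsChain.mono (fun D hD => (mem_sep_iff.mp hD).1) hchainc)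
      rw [mem_sep_iff] at hBT'
      have hBT := hBT'
      have hBmin : ∀ D ∈ c, M ⊆ D → B ⊆ D := fun D h1 h2 => hBmin' D (mem_sep h1 h2)
      have hAM : A ⊂ M := hAS.2.ssubset_of_ne (fun h => hMc (h ▸ hAS.1))
      have hMB : M ⊂ B := hBT.2.ssubset_of_ne (fun h => hMc (h ▸ hBT.1))
      obtain ⟨x, hxM, hxA⟩ := Set.exists_of_ssubset hAM
      obtain ⟨y, hyB, hyM⟩ := Set.exists_of_ssubset hMB
      have hsplit : ∀ D ∈ c, D ⊆ A ∨ B ⊆ D := by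
        intro D hD
        rcases hcomp D hD with h | h
        · exact Or.inl (hAmax D hD h)
        · exact Or.inr (hBmin D hD h)
      have hich : ∀ z ∈ B, IsChain (· ⊆ ·) (insert (insert z A) c) := by
        intro z hz
        apply hchainc.insert
        intro D hD _
        rcases hsplit D hD with h | h
        · exact Or.inr (h.trans (subset_insert _ _))
        · exact Or.inl ((insert_subset hz (hAM.subset.trans hMB.subset)).trans h)
      obtain ⟨C₁, hC₁, hcC₁⟩ := (hich x (hMB.subset hxM)).exists_maxChain
      obtain ⟨C₂, hC₂, hcC₂⟩ := (hich y hyB).exists_maxChain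
      -- extChain c equals both C₁ and C₂
      have hext : ∀ C : Set (Set (Fin n)), IsMaxChain (· ⊆ ·) C → c ⊆ C → extChain c = C := by
        intro C hC hcC
        have hCu : C ∈ MaxChainsOf (Set.univ : Set (Set (Fin n))) := by
          rw [maxChainsOf_univ]; exact hC
        rw [← himg] at hCu
        obtain ⟨c₁, hc₁, he₁⟩ := hCu
        have hc₁C : c₁ ⊆ C := he₁ ▸ (extChain_spec hc₁.2.1).2
        have : c₁ = c := maxchain_unique hc₁ hc hC.isChain hc₁C hcC
        rw [← this, he₁]
      have he1 : extChain c = C₁ := hext C₁ hC₁ ((subset_insert _ _).trans hcC₁)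
      have he2 : extChain c = C₂ := hext C₂ hC₂ ((subset_insert _ _).trans hcC₂)
      -- but C₁ ≠ C₂
      have hm1 : insert x A ∈ C₁ := hcC₁ (mem_insert _ _)
      have hm2 : insert y A ∈ C₂ := hcC₂ (mem_insert _ _)
      rw [← he2] at hm2
      rw [← he1] at hm1
      have hxy : x ≠ y := fun h => hyM (h ▸ hxM)
      have hyA : y ∉ A := fun h => hyM (hAM.subset h)
      have hne12 : insert x A ≠ insert y A := by
        intro h
        have : x ∈ insert y A := h ▸ mem_insert x A
        rcases this with h' | h'
        · exact hxy h'
        · exact hxA h'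
      rcases (extChain_spec hc.2.1).1.isChain hm1 hm2 hne12 with h | h
      · have : x ∈ insert y A := h (mem_insert x A)
        rcases this with h' | h'
        · exact hxy h'
        · exact hxA h'
      · have : y ∈ insert x A := h (mem_insert y A)
        rcases this with h' | h'
        · exact hyM (h' ▸ hxM)
        · exact hyA h'
    -- now L = univ
    ext S
    simp only [Set.mem_univ, iff_true]
    have hSchain : IsChain (· ⊆ ·) ({S} : Set (Set (Fin n))) :=
      Set.Subsingleton.isChain (subsingleton_singleton)
    obtain ⟨C, hC, hSC⟩ := hSchain.exists_maxChain
    have hCu : C ∈ MaxChainsOf (Set.univ : Set (Set (Fin n))) := by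
      rw [maxChainsOf_univ]; exact hC
    rw [← himg] at hCu
    obtain ⟨c₀, hc₀, he₀⟩ := hCu
    have hc₀C : c₀ ⊆ C := he₀ ▸ (extChain_spec hc₀.2.1).2
    have : c₀ = C := (hflag c₀ hc₀).2 hC.isChain hc₀C
    exact hc₀.1 (this ▸ hSC (mem_singleton S))
  · rintro rfl
    exact ncard_maxChains_univ
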